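/- The family H_2 of all non-IP_2-sets, regarded as a subset of the Polish space P(ω) ≅ 2^ω, is Π¹₁-complete: its complement is analytic, and for every Polish space Y and every coanalytic set B ⊆ Y there is a Borel measurable function f : Y → P(ω) with f⁻¹(H_2) = B. -/

import Mathlib

open MeasureTheory

/-- `FS₂ B = { a + b : a, b ∈ B, a ≠ b }`. -/
def FS2 (B : Set ℕ) : Set ℕ :=
  {n | ∃ a ∈ B, ∃ b ∈ B, a ≠ b ∧ a + b = n}

/-- `A ⊆ ω` is an IP₂-set if there is an infinite `B ⊆ ω` with `FS₂ B ⊆ A`. -/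
def IsIP2 (A : Set ℕ) : Prop :=
  ∃ B : Set ℕ, B.Infinite ∧ FS2 B ⊆ A

/-- The ideal `H₂` of all non-IP₂-sets, viewed inside the Cantor space `2^ω ≅ P(ω)`. -/
def H2 : Set (ℕ → Bool) :=
  {x | ¬ IsIP2 {n | x n = true}}

namespace H2Aux

/-- Injective code of finite sequences (lists, most-recent element first). -/
def c : List ℕ → ℕ
  | [] => 0
  | a :: s => Nat.pair a (c s) + 1

lemma c_cons (a : ℕ) (s : List ℕ) : c (a :: s) = Nat.pair a (c s) + 1 := rfl

lemma c_lt_cons (a : ℕ) (s : List ℕ) : c s < c (a :: s) := by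
  have := Nat.right_le_pair a (c s)
  simp only [c_cons]; omega

lemma c_inj : Function.Injective c := by
  intro l
  induction l with
  | nil =>
    intro l' h
    cases l' with
    | nil => rfl
    | cons b t => simp [c] at h
  | cons a s ih =>
    intro l' h
    cases l' with
    | nil => simp [c] at h
    | cons b t =>
      simp only [c_cons, Nat.add_right_cancel_iff] at h
      obtain ⟨h1, h2⟩ := Nat.pair_eq_pair.mp h
      rw [h1, ih h2]

lemma c_append_lt (s u : List ℕ) (hu : u ≠ []) : c s < c (u ++ s) := by
  induction u with
  | nil => simp at hu
  | cons a u' ih =>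
    rcases eq_or_ne u' [] with rfl | h
    · simpa using c_lt_cons a s
    · exact (ih h).trans (c_lt_cons a (u' ++ s))

lemma c_suffix_lt {s t : List ℕ} (h : s <:+ t) (hne : s ≠ t) : c s < c t := by
  obtain ⟨u, rfl⟩ := h
  apply c_append_lt
  rintro rfl; simp at hne

/-- Value of a sequence: sum of `5 ^ c u` over nonempty suffixes `u`. -/
def v : List ℕ → ℕ
  | [] => 0
  | a :: s => 5 ^ c (a :: s) + v s

lemma v_cons (a : ℕ) (s : List ℕ) : v (a :: s) = 5 ^ c (a :: s) + v s := rfl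

lemma v_lower {l : List ℕ} (h : l ≠ []) : 5 ^ c l ≤ v l := by
  cases l with
  | nil => simp at h
  | cons a s => rw [v_cons]; omega

lemma v_upper (l : List ℕ) : 4 * v l < 5 ^ (c l + 1) := by
  induction l with
  | nil => simp [v, c]
  | cons a s ih =>
    have h1 : c s + 1 ≤ c (a :: s) := c_lt_cons a s
    have h2 : (5 : ℕ) ^ (c s + 1) ≤ 5 ^ c (a :: s) :=
      Nat.pow_le_pow_right (by norm_num) h1
    rw [v_cons, pow_succ]
    omega

lemma suffix_cons_exists {s t : List ℕ} (h : s <:+ t) (hne : s ≠ t) :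
    ∃ a r, t = a :: r ∧ s <:+ r := by
  obtain ⟨u, rfl⟩ := h
  cases u with
  | nil => simp at hne
  | cons a u' => exact ⟨a, u' ++ s, rfl, ⟨u', rfl⟩⟩

lemma v_suffix_le {s t : List ℕ} (h : s <:+ t) : v s ≤ v t := by
  obtain ⟨u, rfl⟩ := h
  induction u with
  | nil => exact le_rfl
  | cons a u' ih =>
    calc v s ≤ v (u' ++ s) := ih
    _ ≤ v ((a :: u') ++ s) := by rw [List.cons_append, v_cons]; exact Nat.le_add_left _ _

lemma v_suffix_lt {s t : List ℕ} (h : s <:+ t) (hne : s ≠ t) :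
    v s + 5 ^ c t ≤ v t := by
  obtain ⟨a, r, rfl, hsr⟩ := suffix_cons_exists h hne
  have := v_suffix_le hsr
  rw [v_cons]
  omega

lemma v_suffix_lt' {s t : List ℕ} (h : s <:+ t) (hne : s ≠ t) : v s < v t := by
  have h1 := v_suffix_lt h hne
  have h2 : 0 < 5 ^ c t := Nat.pow_pos (by norm_num)
  omega

lemma scale_eq {Y m n : ℕ} (h1 : 5 ^ m ≤ Y) (h2 : Y < 5 ^ (m + 1))
    (h3 : 5 ^ n ≤ Y) (h4 : Y < 5 ^ (n + 1)) : m = n := by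
  by_contra h
  rcases Nat.lt_or_ge m n with hl | hl
  · have : (5 : ℕ) ^ (m + 1) ≤ 5 ^ n := Nat.pow_le_pow_right (by norm_num) hl
    omega
  · have hl' : n < m := by omega
    have : (5 : ℕ) ^ (n + 1) ≤ 5 ^ m := Nat.pow_le_pow_right (by norm_num) hl'
    omega

lemma suffix_or_suffix {s₁ s₂ t : List ℕ} (h1 : s₁ <:+ t) (h2 : s₂ <:+ t) :
    s₁ <:+ s₂ ∨ s₂ <:+ s₁ := by
  have h1' : s₁.reverse <+: t.reverse := List.reverse_prefix.mpr h1
  have h2' : s₂.reverse <+: t.reverse := List.reverse_prefix.mpr h2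
  rcases List.prefix_or_prefix_of_prefix h1' h2' with h | h
  · exact Or.inl (List.reverse_prefix.mp h)
  · exact Or.inr (List.reverse_prefix.mp h)

/-- The reversed initial segment `[α (n-1), ..., α 0]` of a sequence `α`. -/
def bseg (α : ℕ → ℕ) : ℕ → List ℕ
  | 0 => []
  | n + 1 => α n :: bseg α n

@[simp] lemma bseg_zero (α : ℕ → ℕ) : bseg α 0 = [] := rfl

lemma bseg_succ (α : ℕ → ℕ) (n : ℕ) : bseg α (n + 1) = α n :: bseg α n := rfl

@[simp] lemma bseg_length (α : ℕ → ℕ) (n : ℕ) : (bseg α n).length = n := by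
  induction n with
  | zero => rfl
  | succ n ih => simp [bseg_succ, ih]

lemma bseg_ne_nil (α : ℕ → ℕ) (n : ℕ) : bseg α (n + 1) ≠ [] := by
  rw [bseg_succ]; exact List.cons_ne_nil _ _

lemma bseg_suffix (α : ℕ → ℕ) {m n : ℕ} (h : m ≤ n) : bseg α m <:+ bseg α n := by
  induction n with
  | zero => simp_all
  | succ n ih =>
    rcases Nat.eq_or_lt_of_le h with rfl | hlt
    · exact List.suffix_rfl
    · exact (ih (by omega)).trans ⟨[α n], rfl⟩

lemma bseg_eq_of_agree {α β : ℕ → ℕ} {n : ℕ} (h : bseg α n = bseg β n) :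
    ∀ k < n, α k = β k := by
  induction n with
  | zero => omega
  | succ n ih =>
    rw [bseg_succ, bseg_succ, List.cons.injEq] at h
    intro k hk
    rcases Nat.lt_succ_iff_lt_or_eq.mp hk with hk' | rfl
    · exact ih h.2 k hk'
    · exact h.1

/-- `n`-th element from the end (i.e. the element added at "time" `n`). -/
def eget (l : List ℕ) (n : ℕ) : ℕ := l.getD (l.length - 1 - n) 0

lemma eget_suffix {s t : List ℕ} (h : s <:+ t) {n : ℕ} (hn : n < s.length) :
    eget s n = eget t n := by
  obtain ⟨u, rfl⟩ := h
  unfold eget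
  rw [List.length_append]
  have h1 : u.length + s.length - 1 - n = u.length + (s.length - 1 - n) := by omega
  rw [h1, List.getD_append_right _ _ _ _ (by omega)]
  congr 1
  omega

lemma eget_cons_suffix {s t : List ℕ} (h : s <:+ t) (hl : s.length < t.length) :
    eget t s.length :: s <:+ t := by
  obtain ⟨u, rfl⟩ := h
  have hu : u ≠ [] := by
    rintro rfl; simp at hl
  obtain ⟨u', a, rfl⟩ := u.eq_nil_or_concat'.resolve_left hu
  have he : eget ((u' ++ [a]) ++ s) s.length = a := by
    unfold eget
    have h1 : ((u' ++ [a]) ++ s).length - 1 - s.length = u'.length := by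
      simp [List.length_append]
    rw [h1, List.append_assoc, List.getD_append_right _ _ _ _ le_rfl]
    simp
  rw [he, List.append_assoc]
  exact ⟨u', rfl⟩

lemma mem_of_append {T : Set (List ℕ)} (hT : ∀ a s, a :: s ∈ T → s ∈ T) :
    ∀ (u s : List ℕ), u ++ s ∈ T → s ∈ T := by
  intro u
  induction u with
  | nil => exact fun s h => h
  | cons a u' ih => exact fun s h => ih s (hT a _ h)

lemma mem_of_suffix {T : Set (List ℕ)} (hT : ∀ a s, a :: s ∈ T → s ∈ T)
    {s t : List ℕ} (h : s <:+ t) (ht : t ∈ T) : s ∈ T := by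
  obtain ⟨u, rfl⟩ := h
  exact mem_of_append hT u s ht

lemma chain_branch {T : Set (List ℕ)} (hT : ∀ a s, a :: s ∈ T → s ∈ T)
    (σ : ℕ → List ℕ) (hmem : ∀ m, σ m ∈ T) (h0 : σ 0 ≠ [])
    (hsuf : ∀ m, σ m <:+ σ (m + 1)) (hne : ∀ m, σ m ≠ σ (m + 1)) :
    ∃ α : ℕ → ℕ, ∀ n, bseg α n ∈ T := by
  have hlen : ∀ m, m < (σ m).length := by
    intro m
    induction m with
    | zero => cases h : σ 0 with
      | nil => exact absurd h h0
      | cons a s => simp [h]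
    | succ m ih =>
      have h1 : (σ m).length ≤ (σ (m + 1)).length := (hsuf m).length_le
      have h2 : (σ m).length ≠ (σ (m + 1)).length := fun h =>
        hne m ((hsuf m).eq_of_length h)
      omega
  have hmono : ∀ {m M : ℕ}, m ≤ M → σ m <:+ σ M := by
    intro m M h
    induction M with
    | zero => simp_all
    | succ M ih =>
      rcases Nat.eq_or_lt_of_le h with rfl | hlt
      · exact List.suffix_rfl
      · exact (ih (by omega)).trans (hsuf M)
  set α : ℕ → ℕ := fun n => eget (σ (n + 1)) n with hα
  have claim : ∀ n M, n ≤ M → bseg α n <:+ σ M := by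
    intro n
    induction n with
    | zero => exact fun M _ => List.nil_suffix
    | succ n ih =>
      intro M hM
      have h1 : bseg α n <:+ σ M := ih M (by omega)
      have hlM : n < (σ M).length := by
        have := hlen M; omega
      have h2 := eget_cons_suffix h1 (by rw [bseg_length]; exact hlM)
      rw [bseg_length] at h2
      have h3 : α n = eget (σ M) n := by
        rw [hα]
        exact eget_suffix (hmono hM) (by have := hlen (n + 1); omega)
      rw [bseg_succ, h3]
      exact h2
  exact ⟨α, fun n => mem_of_suffix hT (claim n n le_rfl) (hmem n)⟩

def AT (T : Set (List ℕ)) : Set ℕ :=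
  {n | ∃ s t : List ℕ, s ∈ T ∧ t ∈ T ∧ s ≠ [] ∧ s <:+ t ∧ s ≠ t ∧ v s + v t = n}

lemma isIP2_AT_of_branch {T : Set (List ℕ)} {α : ℕ → ℕ}
    (hα : ∀ n, bseg α n ∈ T) : IsIP2 (AT T) := by
  refine ⟨Set.range (fun n => v (bseg α (n + 1))), ?_, ?_⟩
  · apply Set.infinite_range_of_injective
    have hsm : StrictMono (fun n => v (bseg α (n + 1))) := by
      intro m n hmn
      exact v_suffix_lt' (bseg_suffix α (by omega))
        (fun h => by have := congrArg List.length h; simp at this; omega)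
    exact hsm.injective
  · rintro x ⟨a, ⟨i, rfl⟩, b, ⟨j, rfl⟩, hab, rfl⟩
    have hij : i ≠ j := by rintro rfl; exact hab rfl
    rcases Nat.lt_or_ge i j with h | h
    · exact ⟨bseg α (i + 1), bseg α (j + 1), hα _, hα _, bseg_ne_nil α i,
        bseg_suffix α (by omega),
        fun h' => by have := congrArg List.length h'; simp at this; omega, rfl⟩
    · have hji : j < i := by omega
      exact ⟨bseg α (j + 1), bseg α (i + 1), hα _, hα _, bseg_ne_nil α j,
        bseg_suffix α (by omega),
        fun h' => by have := congrArg List.length h'; simp at this; omega,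
        by simp [Nat.add_comm]⟩

lemma branch_of_isIP2 {T : Set (List ℕ)} (hT : ∀ a s, a :: s ∈ T → s ∈ T)
    (h : IsIP2 (AT T)) : ∃ α : ℕ → ℕ, ∀ n, bseg α n ∈ T := by
  obtain ⟨B, hBinf, hFS⟩ := h
  set b : ℕ → ℕ := fun n => Nat.nth (· ∈ B) n with hb
  have hBinf' : (setOf (· ∈ B)).Infinite := hBinf
  have hbsm : StrictMono b := Nat.nth_strictMono hBinf'
  have hbmem : ∀ n, b n ∈ B := fun n => Nat.nth_mem_of_infinite hBinf' n
  have h1 : ∀ i j, i < j → ∃ s t : List ℕ,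
      s ∈ T ∧ t ∈ T ∧ s ≠ [] ∧ s <:+ t ∧ s ≠ t ∧ v s + v t = b i + b j := by
    intro i j hij
    exact hFS ⟨b i, hbmem i, b j, hbmem j, (hbsm hij).ne, rfl⟩
  choose s t hsT htT hsne hsuf hst hsum using h1
  have tne : ∀ i j (hij : i < j), t i j hij ≠ [] := by
    intro i j hij hnil
    have h2 := hsuf i j hij
    rw [hnil] at h2
    exact hsne i j hij (List.suffix_nil.mp h2)
  -- Step 1: for `k` large, the pairs `(i,k)` and `(j,k)` share the same long sequence.
  have tEq : ∀ i j k (hij : i < j) (hjk : j < k), 5 * b j ≤ b k →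
      t i k (hij.trans hjk) = t j k hjk := by
    intro i j k hij hjk hbig
    have hik := hij.trans hjk
    have e1 := hsum i k hik
    have e2 := hsum j k hjk
    have l1 : 5 ^ c (t i k hik) ≤ v (t i k hik) := v_lower (tne i k hik)
    have l1' : 5 ^ c (t j k hjk) ≤ v (t j k hjk) := v_lower (tne j k hjk)
    have u1 : 4 * v (t i k hik) < 5 ^ (c (t i k hik) + 1) := v_upper _
    have u1' : 4 * v (t j k hjk) < 5 ^ (c (t j k hjk) + 1) := v_upper _
    have sle1 : v (s i k hik) ≤ v (t i k hik) := v_suffix_le (hsuf i k hik)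
    have sle2 : v (s j k hjk) ≤ v (t j k hjk) := v_suffix_le (hsuf j k hjk)
    have hbij : b i < b j := hbsm hij
    have hp : (5 : ℕ) ^ (c (t i k hik) + 1) = 5 * 5 ^ c (t i k hik) := by
      rw [pow_succ]; ring
    have hp' : (5 : ℕ) ^ (c (t j k hjk) + 1) = 5 * 5 ^ c (t j k hjk) := by
      rw [pow_succ]; ring
    have B1 : 5 ^ c (t i k hik) ≤ b j + b k := by omega
    have B2 : b j + b k < 5 ^ (c (t i k hik) + 1) := by omega
    have B3 : 5 ^ c (t j k hjk) ≤ b j + b k := by omega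
    have B4 : b j + b k < 5 ^ (c (t j k hjk) + 1) := by omega
    exact c_inj (scale_eq B1 B2 B3 B4)
  -- Step 2: comparison of the short sequences for a common large `k`.
  have sStep : ∀ i j k (hij : i < j) (hjk : j < k), 5 * b j ≤ b k →
      (s i k (hij.trans hjk) <:+ s j k hjk) ∧ s i k (hij.trans hjk) ≠ s j k hjk ∧
        v (s i k (hij.trans hjk)) + b j = v (s j k hjk) + b i := by
    intro i j k hij hjk hbig
    have hik := hij.trans hjk
    have τeq := tEq i j k hij hjk hbig
    have e1 := hsum i k hik
    have e2 := hsum j k hjk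
    rw [τeq] at e1
    have hbij : b i < b j := hbsm hij
    have veq : v (s i k hik) + b j = v (s j k hjk) + b i := by omega
    have vlt : v (s i k hik) < v (s j k hjk) := by omega
    have hsik : s i k hik <:+ t j k hjk := by rw [← τeq]; exact hsuf i k hik
    rcases suffix_or_suffix hsik (hsuf j k hjk) with h | h
    · exact ⟨h, fun he => by rw [he] at vlt; omega, veq⟩
    · have := v_suffix_le h; omega
  -- Step 3: the short sequence attached to `(j,k)` does not depend on large `k`.
  have sEq : ∀ j k k' (h0j : 0 < j) (hjk : j < k) (hjk' : j < k'),
      5 * b j ≤ b k → 5 * b j ≤ b k' → s j k hjk = s j k' hjk' := by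
    intro j k k' h0j hjk hjk' hbk hbk'
    obtain ⟨su, sne, sveq⟩ := sStep 0 j k h0j hjk hbk
    obtain ⟨su', sne', sveq'⟩ := sStep 0 j k' h0j hjk' hbk'
    have hb0 : b 0 < b j := hbsm h0j
    have L1 := v_suffix_lt su sne
    have L1' := v_suffix_lt su' sne'
    have U1 := v_upper (s j k hjk)
    have U1' := v_upper (s j k' hjk')
    have hq : (5 : ℕ) ^ (c (s j k hjk) + 1) = 5 * 5 ^ c (s j k hjk) := by
      rw [pow_succ]; ring
    have hq' : (5 : ℕ) ^ (c (s j k' hjk') + 1) = 5 * 5 ^ c (s j k' hjk') := by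
      rw [pow_succ]; ring
    have B1 : 5 ^ c (s j k hjk) ≤ b j - b 0 := by omega
    have B2 : b j - b 0 < 5 ^ (c (s j k hjk) + 1) := by omega
    have B3 : 5 ^ c (s j k' hjk') ≤ b j - b 0 := by omega
    have B4 : b j - b 0 < 5 ^ (c (s j k' hjk') + 1) := by omega
    exact c_inj (scale_eq B1 B2 B3 B4)
  -- Build the chain and extract a branch.
  have hble : ∀ {i j : ℕ}, i ≤ j → b i ≤ b j := fun h => hbsm.monotone h
  set K : ℕ → ℕ := fun j => 5 * b j + j + 1 with hK
  have hKgt : ∀ j, j < K j := by intro j; simp only [hK]; omega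
  have hKb : ∀ j, 5 * b j ≤ b (K j) := by
    intro j
    have h2 : K j ≤ b (K j) := hbsm.le_apply
    have h3 : 5 * b j ≤ K j := by simp only [hK]; omega
    omega
  set σ : ℕ → List ℕ := fun m => s (m + 1) (K (m + 1)) (hKgt (m + 1)) with hσ
  have hchain : ∀ m, σ m <:+ σ (m + 1) ∧ σ m ≠ σ (m + 1) := by
    intro m
    have h2k : m + 2 < K (m + 2) := hKgt (m + 2)
    have h1k : m + 1 < K (m + 2) := by omega
    have hb2 : 5 * b (m + 2) ≤ b (K (m + 2)) := hKb (m + 2)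
    have hb1 : 5 * b (m + 1) ≤ b (K (m + 2)) := by
      have := hble (show m + 1 ≤ m + 2 by omega); omega
    have e1 : σ m = s (m + 1) (K (m + 2)) h1k :=
      sEq (m + 1) (K (m + 1)) (K (m + 2)) (Nat.succ_pos m) (hKgt (m + 1)) h1k
        (hKb (m + 1)) hb1
    have e2 : σ (m + 1) = s (m + 2) (K (m + 2)) h2k := rfl
    obtain ⟨hsu, hne', -⟩ := sStep (m + 1) (m + 2) (K (m + 2)) (by omega) h2k hb2
    rw [e1, e2]
    exact ⟨hsu, hne'⟩
  apply chain_branch hT σ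
  · intro m; exact hsT _ _ _
  · exact hsne _ _ _
  · exact fun m => (hchain m).1
  · exact fun m => (hchain m).2

theorem isIP2_AT_iff {T : Set (List ℕ)} (hT : ∀ a s, a :: s ∈ T → s ∈ T) :
    IsIP2 (AT T) ↔ ∃ α : ℕ → ℕ, ∀ n, bseg α n ∈ T :=
  ⟨branch_of_isIP2 hT, fun ⟨_, hα⟩ => isIP2_AT_of_branch hα⟩

lemma isIP2_iff_inj (A : Set ℕ) :
    IsIP2 A ↔ ∃ g : ℕ → ℕ, Function.Injective g ∧ ∀ i j, i ≠ j → g i + g j ∈ A := by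
  constructor
  · rintro ⟨B, hBinf, hFS⟩
    refine ⟨fun n => (Set.Infinite.natEmbedding B hBinf n).1, ?_, ?_⟩
    · intro i j hc
      exact (Set.Infinite.natEmbedding B hBinf).injective (Subtype.coe_injective hc)
    · intro i j hij
      apply hFS
      exact ⟨_, (Set.Infinite.natEmbedding B hBinf i).2, _, (Set.Infinite.natEmbedding B hBinf j).2,
        fun hc => hij ((Set.Infinite.natEmbedding B hBinf).injective (Subtype.coe_injective hc)), rfl⟩
  · rintro ⟨g, hg, hsum⟩
    refine ⟨Set.range g, Set.infinite_range_of_injective hg, ?_⟩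
    rintro x ⟨a, ⟨i, rfl⟩, b, ⟨j, rfl⟩, hab, rfl⟩
    exact hsum i j (fun hc => hab (by rw [hc]))

lemma analytic_H2_compl : AnalyticSet H2ᶜ := by
  classical
  have m2 : ∀ i : ℕ, Measurable fun p : (ℕ → Bool) × (ℕ → ℕ) => p.2 i :=
    fun i => (measurable_pi_apply i).comp measurable_snd
  have m1 : ∀ n : ℕ, Measurable fun p : (ℕ → Bool) × (ℕ → ℕ) => p.1 n :=
    fun n => (measurable_pi_apply n).comp measurable_fst
  have hchar : H2ᶜ = Prod.fst '' {p : (ℕ → Bool) × (ℕ → ℕ) |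
      (∀ i j : ℕ, i ≠ j → p.2 i ≠ p.2 j) ∧
        ∀ i j : ℕ, i ≠ j → p.1 (p.2 i + p.2 j) = true} := by
    ext x
    simp only [Set.mem_compl_iff, H2, Set.mem_setOf_eq, not_not, Set.mem_image]
    constructor
    · intro hx
      obtain ⟨g, hg, hsum⟩ := (isIP2_iff_inj _).mp hx
      exact ⟨(x, g), ⟨fun i j hij hc => hij (hg hc),
        fun i j hij => hsum i j hij⟩, rfl⟩
    · rintro ⟨⟨x', g⟩, ⟨hg, hsum⟩, rfl⟩
      apply (isIP2_iff_inj _).mpr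
      refine ⟨g, ?_, hsum⟩
      intro i j hc
      by_contra hij
      exact hg i j hij hc
  rw [hchar]
  have heq : ∀ i j : ℕ, MeasurableSet {p : (ℕ → Bool) × (ℕ → ℕ) | p.2 i = p.2 j} := by
    intro i j
    have hrw : {p : (ℕ → Bool) × (ℕ → ℕ) | p.2 i = p.2 j}
        = ⋃ n : ℕ, ((fun p : (ℕ → Bool) × (ℕ → ℕ) => p.2 i) ⁻¹' {n}) ∩
            ((fun p : (ℕ → Bool) × (ℕ → ℕ) => p.2 j) ⁻¹' {n}) := by
      ext p
      simp only [Set.mem_setOf_eq, Set.mem_iUnion, Set.mem_inter_iff, Set.mem_preimage,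
        Set.mem_singleton_iff]
      exact ⟨fun hc => ⟨p.2 j, hc, rfl⟩, fun ⟨n, h1, h2⟩ => h1.trans h2.symm⟩
    rw [hrw]
    exact MeasurableSet.iUnion fun n =>
      ((m2 i) (measurableSet_singleton n)).inter ((m2 j) (measurableSet_singleton n))
  have hS1 : MeasurableSet {p : (ℕ → Bool) × (ℕ → ℕ) | ∀ i j : ℕ, i ≠ j → p.2 i ≠ p.2 j} := by
    have hrw : {p : (ℕ → Bool) × (ℕ → ℕ) | ∀ i j : ℕ, i ≠ j → p.2 i ≠ p.2 j}
        = ⋂ i : ℕ, ⋂ j : ℕ, ⋂ (_ : i ≠ j), {p : (ℕ → Bool) × (ℕ → ℕ) | p.2 i = p.2 j}ᶜ := by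
      ext p
      simp only [Set.mem_setOf_eq, Set.mem_iInter, Set.mem_compl_iff]
    rw [hrw]
    exact MeasurableSet.iInter fun i => MeasurableSet.iInter fun j =>
      MeasurableSet.iInter fun _ => (heq i j).compl
  have hS2 : MeasurableSet {p : (ℕ → Bool) × (ℕ → ℕ) |
      ∀ i j : ℕ, i ≠ j → p.1 (p.2 i + p.2 j) = true} := by
    have hin : ∀ i j : ℕ, MeasurableSet {p : (ℕ → Bool) × (ℕ → ℕ) |
        p.1 (p.2 i + p.2 j) = true} := by
      intro i j
      have hrw : {p : (ℕ → Bool) × (ℕ → ℕ) | p.1 (p.2 i + p.2 j) = true}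
          = ⋃ n : ℕ, ((fun p : (ℕ → Bool) × (ℕ → ℕ) => p.2 i + p.2 j) ⁻¹' {n}) ∩
              ((fun p : (ℕ → Bool) × (ℕ → ℕ) => p.1 n) ⁻¹' {true}) := by
        ext p
        simp only [Set.mem_setOf_eq, Set.mem_iUnion, Set.mem_inter_iff, Set.mem_preimage,
          Set.mem_singleton_iff]
        exact ⟨fun hc => ⟨p.2 i + p.2 j, rfl, hc⟩, fun ⟨n, h1, h2⟩ => by rw [h1]; exact h2⟩
      rw [hrw]
      exact MeasurableSet.iUnion fun n =>
        (((m2 i).add (m2 j)) (measurableSet_singleton n)).inter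
          ((m1 n) (measurableSet_singleton true))
    have hrw : {p : (ℕ → Bool) × (ℕ → ℕ) | ∀ i j : ℕ, i ≠ j → p.1 (p.2 i + p.2 j) = true}
        = ⋂ i : ℕ, ⋂ j : ℕ, ⋂ (_ : i ≠ j),
            {p : (ℕ → Bool) × (ℕ → ℕ) | p.1 (p.2 i + p.2 j) = true} := by
      ext p
      simp only [Set.mem_setOf_eq, Set.mem_iInter]
    rw [hrw]
    exact MeasurableSet.iInter fun i => MeasurableSet.iInter fun j =>
      MeasurableSet.iInter fun _ => hin i j
  have hS : MeasurableSet {p : (ℕ → Bool) × (ℕ → ℕ) |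
      (∀ i j : ℕ, i ≠ j → p.2 i ≠ p.2 j) ∧
        ∀ i j : ℕ, i ≠ j → p.1 (p.2 i + p.2 j) = true} := by
    rw [Set.setOf_and]
    exact hS1.inter hS2
  haveI : PolishSpace ((ℕ → Bool) × (ℕ → ℕ)) := {}
  exact hS.analyticSet.image_of_continuous continuous_fst

lemma reduction (Y : Type) [TopologicalSpace Y] [PolishSpace Y] [MeasurableSpace Y]
    [BorelSpace Y] (B : Set Y) (hB : AnalyticSet Bᶜ) :
    ∃ f : Y → (ℕ → Bool), Measurable f ∧ f ⁻¹' H2 = B := by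
  classical
  rw [AnalyticSet_def] at hB
  rcases hB with hempty | ⟨h, hcont, hrange⟩
  · refine ⟨fun _ _ => false, measurable_const, ?_⟩
    have hBuniv : B = Set.univ := Set.compl_empty_iff.mp hempty
    ext y
    simp only [Set.mem_preimage, H2, Set.mem_setOf_eq, hBuniv, Set.mem_univ, iff_true]
    rintro ⟨B', hB'inf, hFS⟩
    obtain ⟨a, ha, b', hb', hab⟩ := hB'inf.nontrivial
    have := hFS ⟨a, ha, b', hb', hab, rfl⟩
    simp at this
  · letI := TopologicalSpace.upgradeIsCompletelyMetrizable Y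
    set Ty : Y → Set (List ℕ) := fun y =>
      {l | ∃ α : ℕ → ℕ, bseg α l.length = l ∧ dist y (h α) < (1/2 : ℝ) ^ l.length} with hTy
    have hTyc : ∀ (y : Y) (a : ℕ) (s : List ℕ), a :: s ∈ Ty y → s ∈ Ty y := by
      rintro y a s ⟨α, hseg, hd⟩
      refine ⟨α, ?_, ?_⟩
      · have hcons : bseg α (s.length + 1) = a :: s := hseg
        rw [bseg_succ, List.cons.injEq] at hcons
        exact hcons.2
      · have hlt : ((1 : ℝ)/2) ^ (s.length + 1) ≤ (1/2) ^ s.length := by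
          rw [pow_succ]
          nlinarith [pow_pos (show (0:ℝ) < 1/2 by norm_num) s.length]
        calc dist y (h α) < (1/2 : ℝ) ^ (a :: s).length := hd
        _ = (1/2 : ℝ) ^ (s.length + 1) := by rw [List.length_cons]
        _ ≤ _ := hlt
    have hbranch : ∀ y : Y, (∃ α : ℕ → ℕ, ∀ n, bseg α n ∈ Ty y) ↔ y ∈ Set.range h := by
      intro y
      constructor
      · rintro ⟨α, hα⟩
        have hchoice : ∀ n : ℕ, ∃ β : ℕ → ℕ,
            bseg β n = bseg α n ∧ dist y (h β) < (1/2 : ℝ) ^ n := by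
          intro n
          obtain ⟨β, hseg, hd⟩ := hα n
          rw [bseg_length] at hseg hd
          exact ⟨β, hseg, hd⟩
        choose β hβseg hβd using hchoice
        have hβtend : Filter.Tendsto (fun n => h (β n)) Filter.atTop (nhds (h α)) := by
          apply (hcont.tendsto α).comp
          rw [tendsto_pi_nhds]
          intro k
          apply tendsto_nhds_of_eventually_eq
          filter_upwards [Filter.eventually_gt_atTop k] with n hn
          exact bseg_eq_of_agree (hβseg n) k hn
        have hd0 : Filter.Tendsto (fun n => dist y (h (β n))) Filter.atTop (nhds 0) := by
          apply squeeze_zero (fun n => dist_nonneg) (fun n => (hβd n).le)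
          exact tendsto_pow_atTop_nhds_zero_of_lt_one (by norm_num) (by norm_num)
        have hdist : Filter.Tendsto (fun n => dist y (h (β n))) Filter.atTop
            (nhds (dist y (h α))) := tendsto_const_nhds.dist hβtend
        have hzero := tendsto_nhds_unique hdist hd0
        exact ⟨α, (dist_eq_zero.mp hzero).symm⟩
      · rintro ⟨α, rfl⟩
        exact ⟨α, fun n => ⟨α, by rw [bseg_length], by rw [bseg_length, dist_self]; positivity⟩⟩
    refine ⟨fun y n => decide (n ∈ AT (Ty y)), ?_, ?_⟩
    · apply measurable_pi_lambda
      intro n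
      apply measurable_to_countable'
      have hopen : ∀ l : List ℕ, IsOpen {y : Y | l ∈ Ty y} := by
        intro l
        have hrw : {y : Y | l ∈ Ty y} = ⋃ α : ℕ → ℕ, ⋃ (_ : bseg α l.length = l),
            Metric.ball (h α) ((1/2 : ℝ) ^ l.length) := by
          ext y
          simp only [Set.mem_setOf_eq, Set.mem_iUnion, Metric.mem_ball, hTy]
          exact ⟨fun ⟨α, h1, h2⟩ => ⟨α, h1, h2⟩, fun ⟨α, h1, h2⟩ => ⟨α, h1, h2⟩⟩
        rw [hrw]
        exact isOpen_iUnion fun α => isOpen_iUnion fun _ => Metric.isOpen_ball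
      have hMeasA : MeasurableSet {y : Y | n ∈ AT (Ty y)} := by
        have hrw : {y : Y | n ∈ AT (Ty y)} = ⋃ s : List ℕ, ⋃ t : List ℕ,
            ⋃ (_ : s ≠ [] ∧ s <:+ t ∧ s ≠ t ∧ v s + v t = n),
              ({y : Y | s ∈ Ty y} ∩ {y : Y | t ∈ Ty y}) := by
          ext y
          simp only [Set.mem_setOf_eq, Set.mem_iUnion, Set.mem_inter_iff, AT]
          constructor
          · rintro ⟨s, t, h1, h2, h3, h4, h5, h6⟩
            exact ⟨s, t, ⟨h3, h4, h5, h6⟩, h1, h2⟩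
          · rintro ⟨s, t, ⟨h3, h4, h5, h6⟩, h1, h2⟩
            exact ⟨s, t, h1, h2, h3, h4, h5, h6⟩
        rw [hrw]
        exact MeasurableSet.iUnion fun s => MeasurableSet.iUnion fun t =>
          MeasurableSet.iUnion fun _ =>
            ((hopen s).measurableSet.inter (hopen t).measurableSet)
      intro bo
      cases bo
      · have hrw : (fun y : Y => decide (n ∈ AT (Ty y))) ⁻¹' {false}
            = {y : Y | n ∈ AT (Ty y)}ᶜ := by
          ext y; simp
        rw [hrw]; exact hMeasA.compl
      · have hrw : (fun y : Y => decide (n ∈ AT (Ty y))) ⁻¹' {true}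
            = {y : Y | n ∈ AT (Ty y)} := by
          ext y; simp
        rw [hrw]; exact hMeasA
    · ext y
      simp only [Set.mem_preimage, H2, Set.mem_setOf_eq]
      have hset : {n : ℕ | decide (n ∈ AT (Ty y)) = true} = AT (Ty y) := by
        ext n; simp
      rw [hset, isIP2_AT_iff (hTyc y), hbranch y, hrange]
      simp

end H2Aux

/-- `H₂` is `Π¹₁`-complete: its complement is analytic, and every coanalytic subset
of every Polish space Borel-reduces to it. -/
theorem H2_coanalytic_complete :
    AnalyticSet H2ᶜ ∧
      ∀ (Y : Type) [TopologicalSpace Y] [PolishSpace Y]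
        [MeasurableSpace Y] [BorelSpace Y] (B : Set Y),
        AnalyticSet Bᶜ →
          ∃ f : Y → (ℕ → Bool), Measurable f ∧ f ⁻¹' H2 = B := by
  constructor
  · exact H2Aux.analytic_H2_compl
  · intro Y _ _ _ _ B hB
    exact H2Aux.reduction Y B hB
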